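/- The function L : (0,2] → ℝ defined by L(h) = (π − arccos(1−h)) / √(2h) is strictly decreasing, satisfies L(2) = 0 and L(h) → ∞ as h → 0⁺, and is a bijection from (0,2] onto [0,∞). -/

import Mathlib

open Real Filter Topology

/-- The half-length of the zero-resistance defect (`d = 0`, `γ = 0`) sustaining the pinned
fluxon with Hamiltonian value `h` inside the defect: `L(h) = (π − arccos(1−h)) / √(2h)`. -/
noncomputable def Lf (h : ℝ) : ℝ := (π - Real.arccos (1 - h)) / Real.sqrt (2 * h)

noncomputable def phiL (h : ℝ) : ℝ := (π - Real.arccos (1 - h)) / 2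

lemma cos_phiL {h : ℝ} (h0 : 0 ≤ h) (h2 : h ≤ 2) :
    Real.cos (phiL h) = Real.sqrt (h / 2) := by
  have ha1 : (-1 : ℝ) ≤ 1 - h := by linarith
  have ha2 : 1 - h ≤ 1 := by linarith
  have harc0 : 0 ≤ Real.arccos (1 - h) := Real.arccos_nonneg _
  have harcpi : Real.arccos (1 - h) ≤ π := Real.arccos_le_pi _
  have hpi : 0 < π := Real.pi_pos
  have hφ : phiL h = π / 2 - Real.arccos (1 - h) / 2 := by unfold phiL; ring
  rw [hφ, Real.cos_pi_div_two_sub,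
    Real.sin_half_eq_sqrt harc0 (by linarith),
    Real.cos_arccos ha1 ha2]
  norm_num

lemma sqrt_two_mul {h : ℝ} : Real.sqrt (2 * h) = 2 * Real.sqrt (h / 2) := by
  rw [show (2 : ℝ) * h = 4 * (h / 2) by ring, Real.sqrt_mul (by norm_num),
    show Real.sqrt 4 = 2 by
      rw [show (4 : ℝ) = 2 ^ 2 by norm_num, Real.sqrt_sq (by norm_num)]]

lemma phiL_mem {h : ℝ} (hm : h ∈ Set.Ioc (0 : ℝ) 2) :
    phiL h ∈ Set.Ico (0 : ℝ) (π / 2) := by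
  obtain ⟨h0, h2⟩ := hm
  have h1 : Real.arccos (1 - h) ≤ π := Real.arccos_le_pi _
  have h3 : 0 < Real.arccos (1 - h) := Real.arccos_pos.2 (by linarith)
  constructor
  · unfold phiL; linarith
  · unfold phiL; linarith

lemma Lf_eq {h : ℝ} (hm : h ∈ Set.Ioc (0 : ℝ) 2) :
    Lf h = phiL h / Real.cos (phiL h) := by
  obtain ⟨h0, h2⟩ := hm
  rw [cos_phiL h0.le h2]
  unfold Lf phiL
  rw [sqrt_two_mul]
  rw [div_div]

lemma g_strict {s t : ℝ} (hs : 0 ≤ s) (ht : t < π / 2) (hst : s < t) :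
    s / Real.cos s < t / Real.cos t := by
  have hpi : 0 < π := Real.pi_pos
  have hcs : 0 < Real.cos s :=
    Real.cos_pos_of_mem_Ioo ⟨by linarith, by linarith⟩
  have hct : 0 < Real.cos t :=
    Real.cos_pos_of_mem_Ioo ⟨by linarith, by linarith⟩
  rw [div_lt_div_iff₀ hcs hct]
  have hle : Real.cos t ≤ Real.cos s :=
    Real.cos_le_cos_of_nonneg_of_le_pi hs (by linarith) hst.le
  calc s * Real.cos t < t * Real.cos t := by
        exact mul_lt_mul_of_pos_right hst hct
    _ ≤ t * Real.cos s := by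
        exact mul_le_mul_of_nonneg_left hle (by linarith)

lemma phiL_anti : StrictAntiOn phiL (Set.Ioc (0 : ℝ) 2) := by
  intro a ha b hb hab
  have h1 : (1 - b) ∈ Set.Icc (-1 : ℝ) 1 := ⟨by linarith [hb.2], by linarith [hb.1]⟩
  have h2 : (1 - a) ∈ Set.Icc (-1 : ℝ) 1 := ⟨by linarith [ha.2], by linarith [ha.1]⟩
  have := Real.strictAntiOn_arccos h1 h2 (by linarith)
  unfold phiL; linarith

lemma Lf_anti : StrictAntiOn Lf (Set.Ioc (0 : ℝ) 2) := by
  intro a ha b hb hab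
  rw [Lf_eq ha, Lf_eq hb]
  exact g_strict (phiL_mem hb).1 (phiL_mem ha).2 (phiL_anti ha hb hab)

lemma Lf_two : Lf 2 = 0 := by
  unfold Lf
  rw [show (1 : ℝ) - 2 = -1 by norm_num, Real.arccos_neg_one]
  simp

lemma Lf_tendsto : Tendsto Lf (𝓝[>] (0 : ℝ)) atTop := by
  have hnum : Tendsto (fun h : ℝ => π - Real.arccos (1 - h)) (𝓝[>] (0 : ℝ)) (𝓝 π) := by
    have hc : Continuous (fun h : ℝ => π - Real.arccos (1 - h)) :=
      continuous_const.sub (Real.continuous_arccos.comp (continuous_const.sub continuous_id))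
    have := tendsto_nhdsWithin_of_tendsto_nhds (s := Set.Ioi (0:ℝ)) (hc.tendsto 0)
    simpa using this
  have hden : Tendsto (fun h : ℝ => Real.sqrt (2 * h)) (𝓝[>] (0 : ℝ)) (𝓝[>] (0 : ℝ)) := by
    rw [tendsto_nhdsWithin_iff]
    constructor
    · have hc : Continuous (fun h : ℝ => Real.sqrt (2 * h)) :=
        Real.continuous_sqrt.comp (continuous_const.mul continuous_id)
      have := tendsto_nhdsWithin_of_tendsto_nhds (s := Set.Ioi (0:ℝ)) (hc.tendsto 0)
      simpa using this
    · filter_upwards [self_mem_nhdsWithin] with x hx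
      exact Real.sqrt_pos.2 (by have : (0:ℝ) < x := hx; linarith)
  have hinv : Tendsto (fun h : ℝ => (Real.sqrt (2 * h))⁻¹) (𝓝[>] (0 : ℝ)) atTop :=
    tendsto_inv_nhdsGT_zero.comp hden
  have : Tendsto (fun h : ℝ => (π - Real.arccos (1 - h)) * (Real.sqrt (2 * h))⁻¹)
      (𝓝[>] (0 : ℝ)) atTop := hnum.pos_mul_atTop Real.pi_pos hinv
  unfold Lf
  simpa only [div_eq_mul_inv] using this

lemma Lf_contOn {a : ℝ} (ha : 0 < a) : ContinuousOn Lf (Set.Icc a 2) := by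
  apply ContinuousOn.div
  · exact (continuous_const.sub
      (Real.continuous_arccos.comp (continuous_const.sub continuous_id))).continuousOn
  · exact (Real.continuous_sqrt.comp (continuous_const.mul continuous_id)).continuousOn
  · intro x hx
    have : 0 < x := lt_of_lt_of_le ha hx.1
    exact ne_of_gt (Real.sqrt_pos.2 (by positivity))

/-- The function `L(h) = (π − arccos(1−h)) / √(2h)` is strictly decreasing on `(0,2]`,
satisfies `L(2) = 0`, tends to `+∞` as `h → 0⁺`, and is a bijection from `(0,2]`
onto `[0,∞)`. -/
theorem stmt1 :
    StrictAntiOn Lf (Set.Ioc 0 2) ∧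
    Lf 2 = 0 ∧
    Tendsto Lf (𝓝[>] (0 : ℝ)) atTop ∧
    Set.BijOn Lf (Set.Ioc 0 2) (Set.Ici 0) := by
  refine ⟨Lf_anti, Lf_two, Lf_tendsto, ?_, Lf_anti.injOn, ?_⟩
  · intro x hx
    have : Real.arccos (1 - x) ≤ π := Real.arccos_le_pi _
    exact div_nonneg (by linarith) (Real.sqrt_nonneg _)
  · intro y hy
    have hy0 : (0 : ℝ) ≤ y := hy
    obtain ⟨a, hage, hamem⟩ :=
      ((Lf_tendsto.eventually_ge_atTop y).and
        (Ioc_mem_nhdsGT_of_mem (by constructor <;> norm_num : (0:ℝ) ∈ Set.Ico (0:ℝ) 2))).exists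
    obtain ⟨x, hx, hxy⟩ :=
      intermediate_value_Icc' hamem.2 (Lf_contOn hamem.1)
        (by rw [Lf_two]; exact ⟨hy0, hage⟩)
    exact ⟨x, ⟨lt_of_lt_of_le hamem.1 hx.1, hx.2⟩, hxy⟩
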